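/- (Shearer's inequality) Let y^1,…,y^L be random variables each taking values in a finite set, let k ≥ 1 be an integer, and let φ be a family of subsets of {1,…,L} such that every index in {1,…,L} belongs to at least k members of φ. Then H(y^1,…,y^L) ≤ (1/k)·Σ_{S∈φ} H(y^S), where y^S denotes the tuple (y^i : i ∈ S). -/

import Mathlib

open MeasureTheory Real

/-- Shannon entropy of a finite-valued random variable `X`, computed from its
distribution under `μ`. -/
noncomputable def entropy {Ω S : Type*} [MeasurableSpace Ω] [Fintype S]
    (μ : Measure Ω) (X : Ω → S) : ℝ :=
  ∑ x : S, Real.negMulLog ((μ (X ⁻¹' {x})).toReal)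

/-- Conditional Shannon entropy `H(X | Y)` of finite-valued random variables. -/
noncomputable def condEntropy {Ω S T : Type*} [MeasurableSpace Ω] [Fintype S] [Fintype T]
    (μ : Measure Ω) (X : Ω → S) (Y : Ω → T) : ℝ :=
  ∑ x : S, ∑ t : T,
    (μ (X ⁻¹' {x} ∩ Y ⁻¹' {t})).toReal *
      Real.log ((μ (Y ⁻¹' {t})).toReal / (μ (X ⁻¹' {x} ∩ Y ⁻¹' {t})).toReal)


section ShearerAux

/-- The log-sum inequality. -/
lemma log_sum_ineq {ι : Type*} (s : Finset ι) (a b : ι → ℝ)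
    (ha : ∀ i ∈ s, 0 ≤ a i) (hab : ∀ i ∈ s, a i ≤ b i) :
    ∑ i ∈ s, a i * Real.log (b i / a i)
      ≤ (∑ i ∈ s, a i) * Real.log ((∑ i ∈ s, b i) / (∑ i ∈ s, a i)) := by
  set A := ∑ i ∈ s, a i with hA
  set B := ∑ i ∈ s, b i with hB
  rcases eq_or_lt_of_le (Finset.sum_nonneg ha) with h0 | hApos
  · have hz : ∀ i ∈ s, a i = 0 := (Finset.sum_eq_zero_iff_of_nonneg ha).mp h0.symm
    have : ∑ i ∈ s, a i * Real.log (b i / a i) = 0 :=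
      Finset.sum_eq_zero fun i hi => by rw [hz i hi]; ring
    rw [this, hA, ← h0, zero_mul]
  · have hAB : A ≤ B := Finset.sum_le_sum hab
    have hBpos : 0 < B := lt_of_lt_of_le hApos hAB
    have key : ∀ i ∈ s, a i * Real.log (b i / a i)
        ≤ A * b i / B - a i + a i * Real.log (B / A) := by
      intro i hi
      rcases eq_or_lt_of_le (ha i hi) with h0i | hposi
      · rw [← h0i]
        have hbi : 0 ≤ b i := le_trans (ha i hi) (hab i hi)
        have : 0 ≤ A * b i / B := by positivity
        simpa using this
      · have hbi : 0 < b i := lt_of_lt_of_le hposi (hab i hi)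
        have hsplit : Real.log (b i / a i)
            = Real.log ((b i * A) / (a i * B)) + Real.log (B / A) := by
          rw [← Real.log_mul (by positivity) (by positivity)]
          congr 1
          field_simp
          ring_nf
          exact (mul_inv_cancel₀ (ne_of_gt hApos)).symm
        have hle : Real.log ((b i * A) / (a i * B)) ≤ (b i * A) / (a i * B) - 1 :=
          Real.log_le_sub_one_of_pos (by positivity)
        have h2 : a i * Real.log ((b i * A) / (a i * B))
            ≤ a i * ((b i * A) / (a i * B) - 1) :=
          mul_le_mul_of_nonneg_left hle (le_of_lt hposi)
        have h3 : a i * ((b i * A) / (a i * B) - 1) = A * b i / B - a i := by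
          field_simp
        rw [hsplit, mul_add]
        rw [h3] at h2
        linarith
    calc ∑ i ∈ s, a i * Real.log (b i / a i)
        ≤ ∑ i ∈ s, (A * b i / B - a i + a i * Real.log (B / A)) :=
          Finset.sum_le_sum key
      _ = A * B / B - A + A * Real.log (B / A) := by
          rw [Finset.sum_add_distrib, Finset.sum_sub_distrib, ← Finset.sum_mul,
            ← hA, ← Finset.sum_div, ← Finset.mul_sum, ← hB]
      _ = A * Real.log (B / A) := by field_simp; ring

section Lemmas

variable {Ω : Type*} [MeasurableSpace Ω] (μ : Measure Ω) [IsProbabilityMeasure μ]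

/-- Splitting a measure along the fibers of `g ∘ Y`. -/
lemma meas_split {B C : Type*} [Fintype B] (E : Set Ω) (hE : MeasurableSet E)
    (Y : Ω → B) (hY : ∀ b, MeasurableSet (Y ⁻¹' {b})) (g : B → C) (c : C)
    [DecidableEq C] :
    (μ (E ∩ (fun ω => g (Y ω)) ⁻¹' {c})).toReal
      = ∑ t ∈ Finset.univ.filter (fun t => g t = c), (μ (E ∩ Y ⁻¹' {t})).toReal := by
  classical
  have hset : E ∩ (fun ω => g (Y ω)) ⁻¹' {c}
      = ⋃ t ∈ Finset.univ.filter (fun t => g t = c), (E ∩ Y ⁻¹' {t}) := by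
    ext ω
    simp only [Set.mem_inter_iff, Set.mem_preimage, Set.mem_singleton_iff, Set.mem_iUnion,
      Finset.mem_filter, Finset.mem_univ, true_and]
    constructor
    · rintro ⟨hE', hc⟩; exact ⟨Y ω, hc, hE', rfl⟩
    · rintro ⟨t, ht, hE', hYt⟩; exact ⟨hE', by rw [hYt, ht]⟩
  rw [hset, measure_biUnion_finset ?_ (fun t _ => hE.inter (hY t))]
  · exact ENNReal.toReal_sum (fun t _ => measure_ne_top μ _)
  · intro t1 _ t2 _ hne
    refine Set.disjoint_left.mpr ?_
    rintro ω ⟨-, h1⟩ ⟨-, h2⟩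
    exact hne (h1.symm.trans h2)

/-- Splitting `μ E` along the fibers of `X`. -/
lemma meas_split_univ {A : Type*} [Fintype A] (E : Set Ω) (hE : MeasurableSet E)
    (X : Ω → A) (hX : ∀ a, MeasurableSet (X ⁻¹' {a})) :
    (μ E).toReal = ∑ x : A, (μ (X ⁻¹' {x} ∩ E)).toReal := by
  classical
  have := meas_split μ E hE X hX (fun _ => (0 : ℕ)) 0
  simp only [Set.preimage_const_of_mem, Set.mem_singleton_iff, Set.inter_univ] at this
  rw [this, Finset.filter_true]
  exact Finset.sum_congr rfl fun x _ => by rw [Set.inter_comm]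

/-- Chain rule: `H(X, Y) = H(Y) + H(X | Y)`. -/
lemma chain_rule {A B : Type*} [Fintype A] [Fintype B]
    (X : Ω → A) (Y : Ω → B) (hX : ∀ a, MeasurableSet (X ⁻¹' {a}))
    (hY : ∀ b, MeasurableSet (Y ⁻¹' {b})) :
    entropy μ (fun ω => (X ω, Y ω)) = entropy μ Y + condEntropy μ X Y := by
  classical
  have hpre : ∀ (a : A) (b : B),
      (fun ω => (X ω, Y ω)) ⁻¹' {(a, b)} = X ⁻¹' {a} ∩ Y ⁻¹' {b} := by
    intro a b; ext ω; simp [Prod.ext_iff]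
  set p : A → B → ℝ := fun a b => (μ (X ⁻¹' {a} ∩ Y ⁻¹' {b})).toReal with hp
  set q : B → ℝ := fun b => (μ (Y ⁻¹' {b})).toReal with hqdef
  have hq : ∀ b, q b = ∑ a : A, p a b := fun b =>
    meas_split_univ μ (Y ⁻¹' {b}) (hY b) X hX
  have hple : ∀ a b, p a b ≤ q b := fun a b =>
    ENNReal.toReal_mono (measure_ne_top μ _) (measure_mono Set.inter_subset_right)
  have hpnn : ∀ a b, 0 ≤ p a b := fun a b => ENNReal.toReal_nonneg
  have hterm : ∀ a b, p a b * Real.log (q b / p a b)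
      = Real.negMulLog (p a b) + p a b * Real.log (q b) := by
    intro a b
    rcases eq_or_lt_of_le (hpnn a b) with h0 | hpos
    · rw [← h0]; simp [Real.negMulLog]
    · have hqb : 0 < q b := lt_of_lt_of_le hpos (hple a b)
      rw [Real.log_div (ne_of_gt hqb) (ne_of_gt hpos), Real.negMulLog]
      ring
  have hentpair : entropy μ (fun ω => (X ω, Y ω)) = ∑ a : A, ∑ b : B, Real.negMulLog (p a b) := by
    rw [entropy, Fintype.sum_prod_type]
    exact Finset.sum_congr rfl fun a _ => Finset.sum_congr rfl fun b _ => by rw [hpre a b]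
  have hcond : condEntropy μ X Y
      = ∑ a : A, ∑ b : B, (Real.negMulLog (p a b) + p a b * Real.log (q b)) := by
    rw [condEntropy]
    exact Finset.sum_congr rfl fun a _ => Finset.sum_congr rfl fun b _ => hterm a b
  have hsum2 : ∑ a : A, ∑ b : B, p a b * Real.log (q b)
      = ∑ b : B, q b * Real.log (q b) := by
    rw [Finset.sum_comm]
    exact Finset.sum_congr rfl fun b _ => by rw [hq b, Finset.sum_mul]
  have hentY : entropy μ Y = ∑ b : B, Real.negMulLog (q b) := rfl
  rw [hentpair, hcond]
  simp only [Finset.sum_add_distrib]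
  rw [hsum2, hentY]
  simp only [Real.negMulLog_eq_neg, Finset.sum_neg_distrib]
  ring

end Lemmas

section Lemmas2

variable {Ω : Type*} [MeasurableSpace Ω] (μ : Measure Ω) [IsProbabilityMeasure μ]

lemma entropy_comp_inj {A B : Type*} [Fintype A] [Fintype B]
    (f : A → B) (hf : Function.Injective f) (X : Ω → A) :
    entropy μ (fun ω => f (X ω)) = entropy μ X := by
  classical
  rw [entropy, entropy]
  rw [← Finset.sum_subset (Finset.subset_univ (Finset.univ.image f))]
  · rw [Finset.sum_image (fun a _ b _ h => hf h)]
    apply Finset.sum_congr rfl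
    intro a _
    have : (fun ω => f (X ω)) ⁻¹' {f a} = X ⁻¹' {a} := by
      ext ω; simp [hf.eq_iff]
    rw [this]
  · intro b _ hb
    have : (fun ω => f (X ω)) ⁻¹' {b} = ∅ := by
      ext ω
      simp only [Set.mem_preimage, Set.mem_singleton_iff, Set.mem_empty_iff_false, iff_false]
      intro h
      exact hb (Finset.mem_image.mpr ⟨X ω, Finset.mem_univ _, h⟩)
    simp [this]

lemma entropy_of_subsingleton {A : Type*} [Fintype A] [Subsingleton A] (X : Ω → A) :
    entropy μ X = 0 := by
  rw [entropy]
  apply Finset.sum_eq_zero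
  intro x _
  have : X ⁻¹' {x} = Set.univ := by
    ext ω; simp [Subsingleton.elim (X ω) x]
  simp [this]

lemma condEntropy_nonneg {A B : Type*} [Fintype A] [Fintype B] (X : Ω → A) (Y : Ω → B) :
    0 ≤ condEntropy μ X Y := by
  apply Finset.sum_nonneg
  intro x _
  apply Finset.sum_nonneg
  intro t _
  set p := (μ (X ⁻¹' {x} ∩ Y ⁻¹' {t})).toReal with hp
  set q := (μ (Y ⁻¹' {t})).toReal with hq
  have hpq : p ≤ q :=
    ENNReal.toReal_mono (measure_ne_top μ _) (measure_mono Set.inter_subset_right)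
  rcases eq_or_lt_of_le (ENNReal.toReal_nonneg : (0:ℝ) ≤ p) with h0 | hpos
  · rw [hp, ← h0, zero_mul]
  · exact mul_nonneg (le_of_lt hpos) (Real.log_nonneg ((one_le_div hpos).mpr hpq))

/-- Conditioning on a function of `Y` can only increase the conditional entropy. -/
lemma condEntropy_comp_le {A B C : Type*} [Fintype A] [Fintype B] [Fintype C]
    (X : Ω → A) (Y : Ω → B) (g : B → C)
    (hX : ∀ a, MeasurableSet (X ⁻¹' {a})) (hY : ∀ b, MeasurableSet (Y ⁻¹' {b})) :
    condEntropy μ X Y ≤ condEntropy μ X (fun ω => g (Y ω)) := by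
  classical
  rw [condEntropy, condEntropy]
  apply Finset.sum_le_sum
  intro x _
  rw [← Finset.sum_fiberwise Finset.univ g
    (fun t => (μ (X ⁻¹' {x} ∩ Y ⁻¹' {t})).toReal *
      Real.log ((μ (Y ⁻¹' {t})).toReal / (μ (X ⁻¹' {x} ∩ Y ⁻¹' {t})).toReal))]
  apply Finset.sum_le_sum
  intro c _
  have hP : (μ (X ⁻¹' {x} ∩ (fun ω => g (Y ω)) ⁻¹' {c})).toReal
      = ∑ t ∈ Finset.univ.filter (fun t => g t = c), (μ (X ⁻¹' {x} ∩ Y ⁻¹' {t})).toReal :=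
    meas_split μ _ (hX x) Y hY g c
  have hQ : (μ ((fun ω => g (Y ω)) ⁻¹' {c})).toReal
      = ∑ t ∈ Finset.univ.filter (fun t => g t = c), (μ (Y ⁻¹' {t})).toReal := by
    have := meas_split μ Set.univ MeasurableSet.univ Y hY g c
    simpa only [Set.univ_inter] using this
  rw [hP, hQ]
  exact log_sum_ineq _ _ _ (fun t _ => ENNReal.toReal_nonneg)
    (fun t _ => ENNReal.toReal_mono (measure_ne_top μ _) (measure_mono Set.inter_subset_right))

end Lemmas2

section Chain

variable {Ω : Type*} [MeasurableSpace Ω] (μ : Measure Ω) [IsProbabilityMeasure μ]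
variable {L : ℕ} (S : Fin L → Type*) [∀ i, Fintype (S i)] (y : ∀ i, Ω → S i)

/-- The joint random variable of the `y i` for `i ∈ t`. -/
def Yt (t : Finset (Fin L)) : Ω → ∀ j : {x : Fin L // x ∈ t}, S j.1 :=
  fun ω => fun j => y j.1 ω

lemma Yt_fiber (hy' : ∀ i (a : S i), MeasurableSet ((y i) ⁻¹' {a}))
    (t : Finset (Fin L)) (f : ∀ j : {x : Fin L // x ∈ t}, S j.1) :
    MeasurableSet ((Yt S y t) ⁻¹' {f}) := by
  have h : (Yt S y t) ⁻¹' {f} = ⋂ j : {x : Fin L // x ∈ t}, (y j.1) ⁻¹' {f j} := by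
    ext ω
    simp only [Set.mem_preimage, Set.mem_singleton_iff, Set.mem_iInter, Yt, funext_iff]
  rw [h]
  exact MeasurableSet.iInter fun j => hy' j.1 (f j)

lemma chain_sum (hy' : ∀ i (a : S i), MeasurableSet ((y i) ⁻¹' {a})) (t : Finset (Fin L)) :
    entropy μ (Yt S y t)
      = ∑ i ∈ t, condEntropy μ (y i) (Yt S y (t.filter (· < i))) := by
  classical
  induction t using Finset.induction_on_max with
  | empty =>
    haveI : IsEmpty {x : Fin L // x ∈ (∅ : Finset (Fin L))} :=
      ⟨fun j => Finset.notMem_empty j.1 j.2⟩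
    rw [entropy_of_subsingleton, Finset.sum_empty]
  | insert a s hmax ih =>
    have hans : a ∉ s := fun h => lt_irrefl a (hmax a h)
    have h1 : (insert a s).filter (· < a) = s := by
      ext x
      simp only [Finset.mem_filter, Finset.mem_insert]
      constructor
      · rintro ⟨rfl | hx, hlt⟩
        · exact absurd hlt (lt_irrefl _)
        · exact hx
      · intro hx; exact ⟨Or.inr hx, hmax x hx⟩
    have h2 : ∀ i ∈ s, (insert a s).filter (· < i) = s.filter (· < i) := by
      intro i hi
      ext x
      simp only [Finset.mem_filter, Finset.mem_insert]
      constructor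
      · rintro ⟨rfl | hx, hlt⟩
        · exact absurd hlt (not_lt_of_gt (hmax i hi))
        · exact ⟨hx, hlt⟩
      · rintro ⟨hx, hlt⟩; exact ⟨Or.inr hx, hlt⟩
    have hf : Function.Injective
        (fun (g : ∀ j : {x : Fin L // x ∈ insert a s}, S j.1) =>
          (g ⟨a, Finset.mem_insert_self a s⟩,
           fun j : {x : Fin L // x ∈ s} => g ⟨j.1, Finset.mem_insert_of_mem j.2⟩)) := by
      intro g g' h
      have hfst := congrArg Prod.fst h
      have hsnd := congrArg Prod.snd h
      funext j
      rcases Finset.mem_insert.mp j.2 with hj | hj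
      · have hje : j = ⟨a, Finset.mem_insert_self a s⟩ := Subtype.ext hj
        rw [hje]; exact hfst
      · have h' := congrFun hsnd ⟨j.1, hj⟩
        have hje : j = ⟨j.1, Finset.mem_insert_of_mem hj⟩ := Subtype.ext rfl
        rw [hje]; exact h'
    have hYins : entropy μ (Yt S y (insert a s))
        = entropy μ (fun ω => (y a ω, Yt S y s ω)) :=
      (entropy_comp_inj μ _ hf (Yt S y (insert a s))).symm
    rw [hYins, chain_rule μ (y a) (Yt S y s) (hy' a) (Yt_fiber S y hy' s),
      Finset.sum_insert hans, h1,
      Finset.sum_congr rfl (fun i hi => by rw [h2 i hi]), ih]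
    ring

end Chain

end ShearerAux

/-- **Shearer's inequality.** If every index of `{1,…,L}` lies in at least `k`
members of the family `φ` of subsets of `{1,…,L}`, then
`H(y¹,…,y^L) ≤ (1/k) ∑_{s ∈ φ} H(yˢ)`. -/
theorem shearer_inequality
    {Ω : Type*} [MeasurableSpace Ω] (μ : Measure Ω) [IsProbabilityMeasure μ]
    (L : ℕ)
    (S : Fin L → Type*) [∀ i, Fintype (S i)] [∀ i, MeasurableSpace (S i)]
    [∀ i, MeasurableSingletonClass (S i)]
    (y : ∀ i, Ω → S i) (hy : ∀ i, Measurable (y i))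
    (k : ℕ) (hk : 1 ≤ k) (φ : Finset (Finset (Fin L)))
    (hcov : ∀ i : Fin L, k ≤ (φ.filter (fun s => i ∈ s)).card) :
    entropy μ (fun ω => fun i => y i ω)
      ≤ (k : ℝ)⁻¹ * ∑ s ∈ φ, entropy μ (fun ω => fun j : {x : Fin L // x ∈ s} => y j.1 ω) := by
  classical
  have hy' : ∀ i (a : S i), MeasurableSet ((y i) ⁻¹' {a}) :=
    fun i a => hy i (measurableSet_singleton a)
  have hf : Function.Injective
      (fun (g : ∀ i : Fin L, S i)
        (j : {x : Fin L // x ∈ (Finset.univ : Finset (Fin L))}) => g j.1) := by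
    intro g g' h
    funext i
    exact congrFun h ⟨i, Finset.mem_univ i⟩
  have e1 : entropy μ (Yt S y Finset.univ) = entropy μ (fun ω => fun i => y i ω) :=
    entropy_comp_inj μ _ hf (fun ω => fun i => y i ω)
  have hfull : entropy μ (fun ω => fun i => y i ω)
      = ∑ i : Fin L, condEntropy μ (y i) (Yt S y (Finset.univ.filter (· < i))) := by
    rw [← e1]
    convert chain_sum μ S y hy' Finset.univ using 2
  have hHnn : ∀ i : Fin L,
      0 ≤ condEntropy μ (y i) (Yt S y (Finset.univ.filter (· < i))) :=
    fun i => condEntropy_nonneg μ _ _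
  have hs : ∀ s ∈ φ,
      (∑ i ∈ s, condEntropy μ (y i) (Yt S y (Finset.univ.filter (· < i))))
        ≤ entropy μ (fun ω => fun j : {x : Fin L // x ∈ s} => y j.1 ω) := by
    intro s _
    have he : entropy μ (fun ω => fun j : {x : Fin L // x ∈ s} => y j.1 ω)
        = entropy μ (Yt S y s) := rfl
    rw [he, chain_sum μ S y hy' s]
    apply Finset.sum_le_sum
    intro i _
    have hsub : s.filter (· < i) ⊆ Finset.univ.filter (· < i) := by
      intro x hx
      exact Finset.mem_filter.mpr ⟨Finset.mem_univ x, (Finset.mem_filter.mp hx).2⟩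
    have key := condEntropy_comp_le μ (y i) (Yt S y (Finset.univ.filter (· < i)))
      (fun (g : ∀ j : {x : Fin L // x ∈ Finset.univ.filter (· < i)}, S j.1)
        (j : {x : Fin L // x ∈ s.filter (· < i)}) => g ⟨j.1, hsub j.2⟩)
      (hy' i) (Yt_fiber S y hy' _)
    exact key
  have hk' : (0 : ℝ) < (k : ℝ) := by exact_mod_cast Nat.lt_of_lt_of_le Nat.zero_lt_one hk
  have hsum : (k : ℝ) * ∑ i : Fin L, condEntropy μ (y i) (Yt S y (Finset.univ.filter (· < i)))
      ≤ ∑ s ∈ φ, entropy μ (fun ω => fun j : {x : Fin L // x ∈ s} => y j.1 ω) := by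
    calc (k : ℝ) * ∑ i : Fin L, condEntropy μ (y i) (Yt S y (Finset.univ.filter (· < i)))
        = ∑ i : Fin L, (k : ℝ) * condEntropy μ (y i) (Yt S y (Finset.univ.filter (· < i))) :=
          Finset.mul_sum _ _ _
      _ ≤ ∑ i : Fin L, ((φ.filter (fun s => i ∈ s)).card : ℝ)
            * condEntropy μ (y i) (Yt S y (Finset.univ.filter (· < i))) :=
          Finset.sum_le_sum fun i _ =>
            mul_le_mul_of_nonneg_right (Nat.cast_le.mpr (hcov i)) (hHnn i)
      _ = ∑ i : Fin L, ∑ s ∈ φ,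
            (if i ∈ s then condEntropy μ (y i) (Yt S y (Finset.univ.filter (· < i))) else 0) := by
          apply Finset.sum_congr rfl
          intro i _
          rw [← Finset.sum_filter, Finset.sum_const, nsmul_eq_mul]
      _ = ∑ s ∈ φ, ∑ i ∈ s, condEntropy μ (y i) (Yt S y (Finset.univ.filter (· < i))) := by
          rw [Finset.sum_comm]
          apply Finset.sum_congr rfl
          intro s _
          rw [Finset.sum_ite_mem, Finset.univ_inter]
      _ ≤ _ := Finset.sum_le_sum hs
  rw [hfull]
  calc ∑ i : Fin L, condEntropy μ (y i) (Yt S y (Finset.univ.filter (· < i)))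
      = (k : ℝ)⁻¹ * ((k : ℝ) * ∑ i : Fin L,
          condEntropy μ (y i) (Yt S y (Finset.univ.filter (· < i)))) := by
        field_simp
    _ ≤ _ := mul_le_mul_of_nonneg_left hsum (inv_nonneg.mpr hk'.le)
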